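/- The number of partitions λ with d(λ) = d and |λ| - |λ̃| = 2n equals the number of ordered pairs of partitions (μ_1, μ_2) with |μ_1| + |μ_2| = n, where λ̃ denotes the 2-core of λ. -/

import Mathlib

/-- `d(μ) = N₀(μ) - N₁(μ)` for a Young diagram colored with angle color 0. -/
def dcol0 (μ : YoungDiagram) : ℤ :=
  ((μ.cells.filter fun c => (c.1 + c.2) % 2 = 0).card : ℤ) -
    ((μ.cells.filter fun c => (c.1 + c.2) % 2 = 1).card : ℤ)

/-- Two boxes are adjacent if they are horizontal or vertical neighbours. -/
def CellAdjacent (a b : ℕ × ℕ) : Prop :=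
  (a.1 = b.1 ∧ b.2 = a.2 + 1) ∨ (a.2 = b.2 ∧ b.1 = a.1 + 1)

/-- `ν` is obtained from `μ` by removing one domino keeping a Young diagram shape. -/
def DominoStep (μ ν : YoungDiagram) : Prop :=
  ν ≤ μ ∧ ∃ a b : ℕ × ℕ, CellAdjacent a b ∧ a ∉ ν ∧ b ∉ ν ∧
    μ.cells = insert a (insert b ν.cells)

/-- A Young diagram is a 2-core if no domino can be removed from it. -/
def IsTwoCore (μ : YoungDiagram) : Prop := ∀ ν : YoungDiagram, ¬ DominoStep μ ν

/-- `c` is the 2-core of `lam`. -/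
def TwoCoreOf (lam c : YoungDiagram) : Prop :=
  Relation.ReflTransGen DominoStep lam c ∧ IsTwoCore c

namespace TwoQuot


/-- Young diagram from a row-length function, antitone and supported on `range N`. -/
def ofRowFn (r : ℕ → ℕ) (N : ℕ) (hr : ∀ i j, i ≤ j → r j ≤ r i) (hN : ∀ i, N ≤ i → r i = 0) :
    YoungDiagram where
  cells := (Finset.range N ×ˢ Finset.range (r 0)).filter fun c => c.2 < r c.1
  isLowerSet := by
    rintro ⟨i, j⟩ ⟨i', j'⟩ ⟨hi, hj⟩ hm
    simp only [Finset.mem_coe, Finset.mem_filter, Finset.mem_product, Finset.mem_range] at hm ⊢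
    have h1 : r i ≤ r i' := hr i' i hi
    have h2 : j' < r i' := lt_of_le_of_lt hj (lt_of_lt_of_le hm.2 h1)
    refine ⟨⟨lt_of_le_of_lt hi hm.1.1, lt_of_lt_of_le h2 (hr 0 i' (Nat.zero_le _))⟩, h2⟩

theorem mem_ofRowFn {r : ℕ → ℕ} {N : ℕ} {hr} {hN} {c : ℕ × ℕ} :
    c ∈ ofRowFn r N hr hN ↔ c.2 < r c.1 := by
  show c ∈ (ofRowFn r N hr hN).cells ↔ _
  simp only [ofRowFn, Finset.mem_filter, Finset.mem_product, Finset.mem_range]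
  constructor
  · rintro ⟨-, h⟩; exact h
  · intro h
    have hc1 : c.1 < N := by
      by_contra hc; exact absurd h (by simp [hN c.1 (le_of_not_gt hc)])
    exact ⟨⟨hc1, lt_of_lt_of_le h (hr 0 c.1 (Nat.zero_le _))⟩, h⟩

theorem rowLen_eq_of_forall {μ : YoungDiagram} {i m : ℕ} (h : ∀ j, (i, j) ∈ μ ↔ j < m) :
    μ.rowLen i = m := by
  refine le_antisymm ?_ ?_
  · by_contra hc
    have := (h m).mp (YoungDiagram.mem_iff_lt_rowLen.mpr (lt_of_not_ge hc))
    omega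
  · by_contra hc
    have := YoungDiagram.mem_iff_lt_rowLen.mp ((h (μ.rowLen i)).mpr (lt_of_not_ge hc))
    omega

theorem rowLen_ofRowFn {r : ℕ → ℕ} {N : ℕ} {hr} {hN} (i : ℕ) :
    (ofRowFn r N hr hN).rowLen i = r i :=
  rowLen_eq_of_forall fun j => mem_ofRowFn

theorem colLen_le (μ : YoungDiagram) : μ.colLen 0 ≤ μ.card := by
  rw [YoungDiagram.colLen_eq_card]
  exact Finset.card_le_card (Finset.filter_subset _ _)

theorem colLen_ofRowFn_le {r : ℕ → ℕ} {N : ℕ} {hr} {hN} :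
    (ofRowFn r N hr hN).colLen 0 ≤ N := by
  by_contra hc
  have : (N, 0) ∈ ofRowFn r N hr hN := YoungDiagram.mem_iff_lt_colLen.mpr (lt_of_not_ge hc)
  rw [mem_ofRowFn] at this
  simp [hN N le_rfl] at this

theorem colLen_le_iff {μ : YoungDiagram} {N : ℕ} :
    μ.colLen 0 ≤ N ↔ ∀ i, N ≤ i → μ.rowLen i = 0 := by
  constructor
  · intro h i hi
    by_contra hc
    have : (i, 0) ∈ μ := YoungDiagram.mem_iff_lt_rowLen.mpr (Nat.pos_of_ne_zero hc)
    have := YoungDiagram.mem_iff_lt_colLen.mp this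
    omega
  · intro h
    by_contra hc
    have : (N, 0) ∈ μ := YoungDiagram.mem_iff_lt_colLen.mpr (lt_of_not_ge hc)
    rw [YoungDiagram.mem_iff_lt_rowLen, h N le_rfl] at this
    omega

/-- cells as a union of rows -/
theorem cells_eq_biUnion {μ : YoungDiagram} {N : ℕ} (h : μ.colLen 0 ≤ N) :
    μ.cells = (Finset.range N).biUnion μ.row := by
  ext ⟨i, j⟩
  simp only [Finset.mem_biUnion, Finset.mem_range, YoungDiagram.mem_row_iff]
  constructor
  · intro hm
    refine ⟨i, ?_, (μ.mem_cells _).mp hm, rfl⟩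
    have h2 : (i, 0) ∈ μ := μ.up_left_mem le_rfl (Nat.zero_le _) ((μ.mem_cells _).mp hm)
    have := YoungDiagram.mem_iff_lt_colLen.mp h2
    omega
  · rintro ⟨a, _, hm, rfl⟩; exact (μ.mem_cells _).mpr hm

theorem card_eq_sum_rowLens {μ : YoungDiagram} {N : ℕ} (h : μ.colLen 0 ≤ N) :
    μ.card = ∑ i ∈ Finset.range N, μ.rowLen i := by
  show μ.cells.card = _
  rw [cells_eq_biUnion h, Finset.card_biUnion]
  · exact Finset.sum_congr rfl fun i _ => (μ.rowLen_eq_card).symm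
  · intro x _ y _ hxy
    simp only [Finset.disjoint_left, YoungDiagram.mem_row_iff]
    rintro c ⟨-, h1⟩ ⟨-, h2⟩; exact hxy (h1.symm.trans h2)



def sg (i : ℕ) : ℤ := if i % 2 = 0 then 1 else -1

theorem row_color_count (i L : ℕ) :
    (((Finset.range L).filter fun j => (i + j) % 2 = 0).card : ℤ) -
      (((Finset.range L).filter fun j => (i + j) % 2 = 1).card : ℤ) = sg i * (L % 2 : ℕ) := by
  induction L with
  | zero => simp
  | succ L ih =>
    rw [Finset.range_add_one, Finset.filter_insert, Finset.filter_insert]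
    rcases Nat.mod_two_eq_zero_or_one (i + L) with h | h
    · rw [if_pos h, if_neg (by omega), Finset.card_insert_of_notMem (by simp)]
      have hh : sg i * ((L + 1) % 2 : ℕ) = sg i * ((L % 2 : ℕ) : ℤ) + 1 := by
        simp only [sg]; split <;> (push_cast; omega)
      rw [hh]; push_cast at ih ⊢; omega
    · rw [if_neg (by omega), if_pos h, Finset.card_insert_of_notMem (by simp)]
      have hh : sg i * ((L + 1) % 2 : ℕ) = sg i * ((L % 2 : ℕ) : ℤ) - 1 := by
        simp only [sg]; split <;> (push_cast; omega)
      rw [hh]; push_cast at ih ⊢; omega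

theorem filter_row_card (μ : YoungDiagram) (i : ℕ) (p : ℕ → Prop) [DecidablePred p] :
    ((μ.row i).filter fun c => p (c.1 + c.2)).card =
      ((Finset.range (μ.rowLen i)).filter fun j => p (i + j)).card := by
  rw [YoungDiagram.row_eq_prod]
  apply Finset.card_bij (fun c _ => c.2)
  · rintro ⟨a, b⟩ hc
    simp only [Finset.mem_filter, Finset.mem_product, Finset.mem_singleton,
      Finset.mem_range] at hc ⊢
    obtain ⟨⟨rfl, hb⟩, hp⟩ := hc
    exact ⟨hb, hp⟩
  · rintro ⟨a, b⟩ ha ⟨a', b'⟩ hb hab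
    simp only [Finset.mem_filter, Finset.mem_product, Finset.mem_singleton] at ha hb
    simp_all [Prod.ext_iff]
  · intro b hb
    simp only [Finset.mem_filter, Finset.mem_range] at hb
    exact ⟨(i, b), by simp [Finset.mem_filter, hb.1, hb.2], rfl⟩

theorem dcol0_eq_sum {μ : YoungDiagram} {N : ℕ} (h : μ.colLen 0 ≤ N) :
    dcol0 μ = ∑ i ∈ Finset.range N, sg i * ((μ.rowLen i % 2 : ℕ) : ℤ) := by
  have hcells := cells_eq_biUnion h
  have hdisj : ∀ x ∈ Finset.range N, ∀ y ∈ Finset.range N, x ≠ y →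
      Disjoint (μ.row x) (μ.row y) := by
    intro x _ y _ hxy
    simp only [Finset.disjoint_left, YoungDiagram.mem_row_iff]
    rintro c ⟨-, h1⟩ ⟨-, h2⟩; exact hxy (h1.symm.trans h2)
  have key : ∀ (p : ℕ → Prop) (_ : DecidablePred p),
      (μ.cells.filter fun c => p (c.1 + c.2)).card =
        ∑ i ∈ Finset.range N, ((Finset.range (μ.rowLen i)).filter fun j => p (i + j)).card := by
    intro p hp
    rw [hcells, Finset.filter_biUnion, Finset.card_biUnion]
    · exact Finset.sum_congr rfl fun i _ => filter_row_card μ i p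
    · intro x hx y hy hxy
      exact Finset.disjoint_filter_filter (hdisj x hx y hy hxy)
  have k0 := key (fun m => m % 2 = 0) inferInstance
  have k1 := key (fun m => m % 2 = 1) inferInstance
  unfold dcol0
  rw [k0, k1]
  push_cast
  rw [← Finset.sum_sub_distrib]
  exact Finset.sum_congr rfl fun i _ => row_color_count i (μ.rowLen i)



theorem dominoStep_card {μ ν : YoungDiagram} (h : DominoStep μ ν) : μ.card = ν.card + 2 := by
  obtain ⟨-, a, b, hadj, ha, hb, hcells⟩ := h
  have hab : a ≠ b := by
    rcases hadj with ⟨h1, h2⟩ | ⟨h1, h2⟩ <;> (intro hc; rw [hc] at h1 h2; omega)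
  have ha' : a ∉ ν.cells := ha
  have hb' : b ∉ ν.cells := hb
  show μ.cells.card = _
  rw [hcells, Finset.card_insert_of_notMem (by simp [hab, ha']),
    Finset.card_insert_of_notMem hb']

theorem dominoStep_dcol0 {μ ν : YoungDiagram} (h : DominoStep μ ν) : dcol0 μ = dcol0 ν := by
  obtain ⟨-, a, b, hadj, ha, hb, hcells⟩ := h
  have hab : a ≠ b := by
    rcases hadj with ⟨h1, h2⟩ | ⟨h1, h2⟩ <;> (intro hc; rw [hc] at h1 h2; omega)
  have hcol : (a.1 + a.2) % 2 ≠ (b.1 + b.2) % 2 := by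
    rcases hadj with ⟨h1, h2⟩ | ⟨h1, h2⟩ <;> omega
  have ha' : a ∉ ν.cells := ha
  have hb' : b ∉ ν.cells := hb
  unfold dcol0
  rw [hcells]
  simp only [Finset.filter_insert]
  rcases Nat.mod_two_eq_zero_or_one (a.1 + a.2) with h0 | h0
  · have h1 : (b.1 + b.2) % 2 = 1 := by omega
    rw [if_pos h0, if_neg (by omega), if_neg (by omega), if_pos h1,
      Finset.card_insert_of_notMem (by simp [hab, ha']),
      Finset.card_insert_of_notMem (by simp [hb'])]
    push_cast; ring
  · have h1 : (b.1 + b.2) % 2 = 0 := by omega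
    rw [if_neg (by omega), if_pos h1, if_pos h0, if_neg (by omega),
      Finset.card_insert_of_notMem (by simp [hb']),
      Finset.card_insert_of_notMem (by simp [hab, ha'])]
    push_cast; ring

theorem chain_dcol0 {μ c : YoungDiagram} (h : Relation.ReflTransGen DominoStep μ c) :
    dcol0 μ = dcol0 c := by
  induction h with
  | refl => rfl
  | tail _ h2 ih => rw [ih, dominoStep_dcol0 h2]

theorem exists_core (μ : YoungDiagram) :
    ∃ c, Relation.ReflTransGen DominoStep μ c ∧ IsTwoCore c := by
  suffices H : ∀ k (μ : YoungDiagram), μ.card ≤ k →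
      ∃ c, Relation.ReflTransGen DominoStep μ c ∧ IsTwoCore c from H μ.card μ le_rfl
  intro k
  induction k with
  | zero =>
    intro μ hμ
    refine ⟨μ, Relation.ReflTransGen.refl, fun ν hν => ?_⟩
    have := dominoStep_card hν
    omega
  | succ k ih =>
    intro μ hμ
    by_cases h : IsTwoCore μ
    · exact ⟨μ, Relation.ReflTransGen.refl, h⟩
    · simp only [IsTwoCore, not_forall, not_not] at h
      obtain ⟨ν, hν⟩ := h
      have hc := dominoStep_card hν
      obtain ⟨c, hchain, hcore⟩ := ih ν (by omega)
      exact ⟨c, Relation.ReflTransGen.head hν hchain, hcore⟩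



theorem horizontal_domino {c : YoungDiagram} {i : ℕ}
    (h : c.rowLen (i + 1) + 2 ≤ c.rowLen i) : ¬ IsTwoCore c := by
  intro hcore
  set L := c.rowLen i with hL
  set N := c.colLen 0 with hN
  have anti : ∀ a b : ℕ, a ≤ b → c.rowLen b ≤ c.rowLen a := fun a b hab => c.rowLen_anti a b hab
  have hiN : i < N := by
    rw [hN, ← YoungDiagram.mem_iff_lt_colLen, YoungDiagram.mem_iff_lt_rowLen]; omega
  have hzero : ∀ j, N ≤ j → c.rowLen j = 0 := colLen_le_iff.mp le_rfl
  set r' : ℕ → ℕ := fun j => if j = i then L - 2 else c.rowLen j with hr'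
  have hvi : r' i = L - 2 := by simp [hr']
  have hvo : ∀ j, j ≠ i → r' j = c.rowLen j := by intro j hj; simp [hr', hj]
  have hle : ∀ x, r' x ≤ c.rowLen x := by
    intro x
    by_cases hx : x = i
    · rw [hx, hvi]; omega
    · rw [hvo x hx]
  have hr'anti : ∀ a b : ℕ, a ≤ b → r' b ≤ r' a := by
    intro a b hab
    by_cases hb : b = i
    · subst hb
      by_cases ha : a = b
      · rw [ha]
      · rw [hvi, hvo a ha]
        have := anti a b hab
        omega
    · rw [hvo b hb]
      by_cases ha : a = i
      · rw [ha, hvi]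
        have hb2 : i + 1 ≤ b := by omega
        have := anti (i + 1) b hb2
        omega
      · rw [hvo a ha]; exact anti a b hab
  have hr'zero : ∀ j, N ≤ j → r' j = 0 := by
    intro j hj
    rw [hvo j (by omega)]
    exact hzero j hj
  set ν := ofRowFn r' N hr'anti hr'zero with hν
  have hmem : ∀ x y : ℕ, (x, y) ∈ ν ↔ y < r' x := fun x y => mem_ofRowFn
  apply hcore ν
  refine ⟨?_, (i, L - 2), (i, L - 1), Or.inl ⟨rfl, by omega⟩, ?_, ?_, ?_⟩
  · rw [← YoungDiagram.cells_subset_iff]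
    rintro ⟨x, y⟩ hz
    rw [YoungDiagram.mem_cells] at hz ⊢
    rw [hmem] at hz
    rw [YoungDiagram.mem_iff_lt_rowLen]
    exact lt_of_lt_of_le hz (hle x)
  · rw [hmem, hvi]; omega
  · rw [hmem, hvi]; omega
  · ext ⟨x, y⟩
    simp only [Finset.mem_insert, Prod.mk.injEq, YoungDiagram.mem_cells]
    rw [YoungDiagram.mem_iff_lt_rowLen, hmem]
    by_cases hx : x = i
    · simp only [hx, true_and]
      rw [hvi]
      have hxi : c.rowLen i = L := hL.symm
      rw [hxi]
      omega
    · rw [hvo x hx]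
      simp only [hx, false_and, false_or]

theorem vertical_domino {c : YoungDiagram} {i : ℕ}
    (heq : c.rowLen i = c.rowLen (i + 1)) (hpos : 0 < c.rowLen i)
    (hdrop : c.rowLen (i + 2) < c.rowLen i) : ¬ IsTwoCore c := by
  intro hcore
  set L := c.rowLen i with hL
  set N := c.colLen 0 with hN
  have anti : ∀ a b : ℕ, a ≤ b → c.rowLen b ≤ c.rowLen a := fun a b hab => c.rowLen_anti a b hab
  have hi1N : i + 1 < N := by
    rw [hN, ← YoungDiagram.mem_iff_lt_colLen, YoungDiagram.mem_iff_lt_rowLen]; omega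
  have hzero : ∀ j, N ≤ j → c.rowLen j = 0 := colLen_le_iff.mp le_rfl
  set r' : ℕ → ℕ := fun j => if j = i ∨ j = i + 1 then L - 1 else c.rowLen j with hr'
  have hvi : r' i = L - 1 := by simp [hr']
  have hvi1 : r' (i + 1) = L - 1 := by simp [hr']
  have hvo : ∀ j, j ≠ i → j ≠ i + 1 → r' j = c.rowLen j := by
    intro j h1 h2; simp [hr', h1, h2]
  have hle : ∀ x, r' x ≤ c.rowLen x := by
    intro x
    by_cases h1 : x = i
    · rw [h1, hvi]; omega
    · by_cases h2 : x = i + 1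
      · rw [h2, hvi1]; omega
      · rw [hvo x h1 h2]
  have hr'anti : ∀ a b : ℕ, a ≤ b → r' b ≤ r' a := by
    intro a b hab
    by_cases hb : b = i ∨ b = i + 1
    · have hvb : r' b = L - 1 := by rcases hb with rfl | rfl; exacts [hvi, hvi1]
      rw [hvb]
      by_cases ha : a = i ∨ a = i + 1
      · have hva : r' a = L - 1 := by rcases ha with rfl | rfl; exacts [hvi, hvi1]
        rw [hva]
      · rw [hvo a (fun hc => ha (Or.inl hc)) (fun hc => ha (Or.inr hc))]
        have haa : a ≤ i := by omega
        have := anti a i haa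
        omega
    · rw [hvo b (fun hc => hb (Or.inl hc)) (fun hc => hb (Or.inr hc))]
      by_cases ha : a = i ∨ a = i + 1
      · have hva : r' a = L - 1 := by rcases ha with rfl | rfl; exacts [hvi, hvi1]
        rw [hva]
        have hb2 : i + 2 ≤ b := by omega
        have := anti (i + 2) b hb2
        omega
      · rw [hvo a (fun hc => ha (Or.inl hc)) (fun hc => ha (Or.inr hc))]
        exact anti a b hab
  have hr'zero : ∀ j, N ≤ j → r' j = 0 := by
    intro j hj
    rw [hvo j (by omega) (by omega)]
    exact hzero j hj
  set ν := ofRowFn r' N hr'anti hr'zero with hν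
  have hmem : ∀ x y : ℕ, (x, y) ∈ ν ↔ y < r' x := fun x y => mem_ofRowFn
  apply hcore ν
  refine ⟨?_, (i, L - 1), (i + 1, L - 1), Or.inr ⟨rfl, rfl⟩, ?_, ?_, ?_⟩
  · rw [← YoungDiagram.cells_subset_iff]
    rintro ⟨x, y⟩ hz
    rw [YoungDiagram.mem_cells] at hz ⊢
    rw [hmem] at hz
    rw [YoungDiagram.mem_iff_lt_rowLen]
    exact lt_of_lt_of_le hz (hle x)
  · rw [hmem, hvi]; omega
  · rw [hmem, hvi1]; omega
  · ext ⟨x, y⟩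
    simp only [Finset.mem_insert, Prod.mk.injEq, YoungDiagram.mem_cells]
    rw [YoungDiagram.mem_iff_lt_rowLen, hmem]
    by_cases h1 : x = i
    · have hni : ¬ (x = i + 1) := by omega
      simp only [h1, true_and, hni, false_and, false_or]
      rw [hvi]
      have hxi : c.rowLen i = L := hL.symm
      rw [hxi]
      omega
    · by_cases h2 : x = i + 1
      · simp only [h1, false_and, h2, true_and, false_or]
        rw [hvi1, ← heq]
        omega
      · rw [hvo x h1 h2]
        simp only [h1, h2, false_and, false_or]

theorem twoCore_no_equal {c : YoungDiagram} (hcore : IsTwoCore c) :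
    ∀ i, 0 < c.rowLen i → c.rowLen i ≠ c.rowLen (i + 1) := by
  suffices H : ∀ f i, c.colLen 0 ≤ i + f → 0 < c.rowLen i → c.rowLen i ≠ c.rowLen (i + 1) by
    intro i h
    exact H (c.colLen 0) i (by omega) h
  intro f
  induction f with
  | zero =>
    intro i hf hpos
    have := (colLen_le_iff.mp (by omega : c.colLen 0 ≤ i)) i le_rfl
    omega
  | succ f ih =>
    intro i hf hpos heq
    by_cases hdrop : c.rowLen (i + 2) < c.rowLen i
    · exact vertical_domino heq hpos hdrop hcore
    · have h1 : c.rowLen (i + 2) ≤ c.rowLen (i + 1) := c.rowLen_anti _ _ (by omega)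
      have h2 : c.rowLen (i + 1) = c.rowLen (i + 2) := by omega
      exact ih (i + 1) (by omega) (by omega) h2

theorem twoCore_step {c : YoungDiagram} (hcore : IsTwoCore c) (i : ℕ) (hi : 0 < c.rowLen i) :
    c.rowLen i = c.rowLen (i + 1) + 1 := by
  have h1 : c.rowLen (i + 1) ≤ c.rowLen i := c.rowLen_anti _ _ (by omega)
  have h2 : ¬ (c.rowLen (i + 1) + 2 ≤ c.rowLen i) := fun hc => horizontal_domino hc hcore
  have h3 := twoCore_no_equal hcore i hi
  omega

theorem twoCore_rowLen {c : YoungDiagram} (hcore : IsTwoCore c) (i : ℕ) :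
    c.rowLen i = c.colLen 0 - i := by
  set k := c.colLen 0 with hk
  have key : ∀ j, j ≤ k → c.rowLen (k - j) = j := by
    intro j
    induction j with
    | zero =>
      intro
      exact (colLen_le_iff.mp le_rfl) k (by omega)
    | succ j ih =>
      intro hj
      have hpos : 0 < c.rowLen (k - j - 1) := by
        rw [← YoungDiagram.mem_iff_lt_rowLen, YoungDiagram.mem_iff_lt_colLen]
        omega
      have hstep := twoCore_step hcore (k - j - 1) hpos
      have heq : k - j - 1 + 1 = k - j := by omega
      rw [heq, ih (by omega)] at hstep
      have h2 : k - (j + 1) = k - j - 1 := by omega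
      rw [h2]
      omega
  by_cases hik : i ≤ k
  · have h1 := key (k - i) (by omega)
    have h2 : k - (k - i) = i := by omega
    rw [h2] at h1
    omega
  · have : c.rowLen i = 0 := (colLen_le_iff.mp le_rfl) i (by omega)
    omega



def tstair (k : ℕ) : ℤ := ∑ i ∈ Finset.range k, sg i * (((k - i) % 2 : ℕ) : ℤ)

theorem tstair_succ_succ (k : ℕ) : tstair (k + 2) = tstair k + sg (k + 1) := by
  unfold tstair
  rw [Finset.sum_range_succ, Finset.sum_range_succ]
  have h1 : (k + 2 - k) % 2 = 0 := by omega
  have h2 : (k + 2 - (k + 1)) % 2 = 1 := by omega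
  rw [h1, h2]
  have h3 : ∀ i ∈ Finset.range k, sg i * (((k + 2 - i) % 2 : ℕ) : ℤ) =
      sg i * (((k - i) % 2 : ℕ) : ℤ) := by
    intro i hi
    rw [Finset.mem_range] at hi
    have : (k + 2 - i) % 2 = (k - i) % 2 := by omega
    rw [this]
  rw [Finset.sum_congr rfl h3]
  push_cast
  ring

theorem sg_even {m : ℕ} (h : m % 2 = 0) : sg m = 1 := by unfold sg; rw [if_pos h]
theorem sg_odd {m : ℕ} (h : m % 2 = 1) : sg m = -1 := by unfold sg; rw [if_neg (by omega)]

theorem tstair_closed (m : ℕ) : tstair (2 * m) = -(m : ℤ) ∧ tstair (2 * m + 1) = (m : ℤ) + 1 := by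
  induction m with
  | zero =>
    constructor
    · simp [tstair]
    · show tstair 1 = 1
      unfold tstair
      rw [Finset.sum_range_one]
      norm_num [sg]
  | succ m ih =>
    constructor
    · have : 2 * (m + 1) = 2 * m + 2 := by ring
      rw [this, tstair_succ_succ, ih.1, sg_odd (by omega)]
      push_cast; ring
    · have : 2 * (m + 1) + 1 = (2 * m + 1) + 2 := by ring
      rw [this, tstair_succ_succ, ih.2, sg_even (by omega)]
      push_cast; ring

theorem sum_stair (k : ℕ) : 2 * (∑ i ∈ Finset.range k, (k - i)) = k * (k + 1) := by
  induction k with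
  | zero => simp
  | succ k ih =>
    rw [Finset.sum_range_succ]
    have h1 : ∀ i ∈ Finset.range k, k + 1 - i = (k - i) + 1 := by
      intro i hi; rw [Finset.mem_range] at hi; omega
    rw [Finset.sum_congr rfl h1, Finset.sum_add_distrib, Finset.sum_const, Finset.card_range]
    have h2 : k + 1 - k = 1 := by omega
    rw [h2]
    simp only [smul_eq_mul, mul_one]
    nlinarith [ih]

theorem twoCore_card {c : YoungDiagram} (hcore : IsTwoCore c) :
    (c.card : ℤ) = 2 * (dcol0 c) ^ 2 - dcol0 c := by
  set k := c.colLen 0 with hk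
  have hcard : 2 * c.card = k * (k + 1) := by
    rw [card_eq_sum_rowLens (le_refl k)]
    rw [Finset.sum_congr rfl fun i _ => twoCore_rowLen hcore i]
    exact sum_stair k
  have hd : dcol0 c = tstair k := by
    rw [dcol0_eq_sum (le_refl k)]
    unfold tstair
    exact Finset.sum_congr rfl fun i _ => by rw [twoCore_rowLen hcore i]
  have hcardZ : 2 * (c.card : ℤ) = (k : ℤ) * ((k : ℤ) + 1) := by exact_mod_cast hcard
  rcases Nat.even_or_odd k with ⟨m, hm⟩ | ⟨m, hm⟩
  · have hk2 : k = 2 * m := by omega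
    have ht : dcol0 c = -(m : ℤ) := by rw [hd, hk2]; exact (tstair_closed m).1
    rw [ht, hk2] at *
    push_cast at hcardZ ⊢
    nlinarith [hcardZ]
  · have hk2 : k = 2 * m + 1 := by omega
    have ht : dcol0 c = (m : ℤ) + 1 := by rw [hd, hk2]; exact (tstair_closed m).2
    rw [ht, hk2] at *
    push_cast at hcardZ ⊢
    nlinarith [hcardZ]



def toS (m : ℕ) (μ : YoungDiagram) : Finset ℕ :=
  (Finset.range m).image fun j => μ.rowLen (m - 1 - j) + j

theorem toS_strictMono {μ : YoungDiagram} {m : ℕ} : ∀ j j' : ℕ, j < j' → j' < m →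
    μ.rowLen (m - 1 - j) + j < μ.rowLen (m - 1 - j') + j' := by
  intro j j' hjj hj'
  have h1 : μ.rowLen (m - 1 - j) ≤ μ.rowLen (m - 1 - j') := μ.rowLen_anti _ _ (by omega)
  omega

theorem toS_injOn {μ : YoungDiagram} {m : ℕ} :
    Set.InjOn (fun j => μ.rowLen (m - 1 - j) + j) (Finset.range m) := by
  intro a ha b hb hab
  simp only [Finset.coe_range, Set.mem_Iio] at ha hb
  simp only at hab
  by_contra hne
  rcases Nat.lt_or_ge a b with h | h
  · have := toS_strictMono (μ := μ) a b h hb; omega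
  · have hba : b < a := by omega
    have := toS_strictMono (μ := μ) b a hba ha; omega

theorem card_toS (μ : YoungDiagram) (m : ℕ) : (toS m μ).card = m := by
  rw [toS, Finset.card_image_of_injOn toS_injOn, Finset.card_range]

theorem orderEmb_gap {S : Finset ℕ} {m : ℕ} (h : S.card = m) (u v : Fin m) (huv : (u : ℕ) ≤ v) :
    (S.orderEmbOfFin h u : ℕ) + ((v : ℕ) - u) ≤ S.orderEmbOfFin h v := by
  obtain ⟨t, ht⟩ : ∃ t, (v : ℕ) = u + t := ⟨(v : ℕ) - u, by omega⟩
  clear huv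
  induction t generalizing v with
  | zero =>
    have : v = u := Fin.ext (by omega)
    subst this
    omega
  | succ t ih =>
    have hw : (u : ℕ) + t < m := by have := v.isLt; omega
    have ihw := ih ⟨(u : ℕ) + t, hw⟩ rfl
    have hlt : (⟨(u : ℕ) + t, hw⟩ : Fin m) < v := by
      rw [Fin.lt_def]; simp; omega
    have := (S.orderEmbOfFin h).strictMono hlt
    simp only [Fin.val_mk] at ihw
    omega

theorem orderEmb_ge {S : Finset ℕ} {m : ℕ} (h : S.card = m) (v : Fin m) :
    (v : ℕ) ≤ S.orderEmbOfFin h v := by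
  have h0 : 0 < m := by have := v.isLt; omega
  have := orderEmb_gap h ⟨0, h0⟩ v (by simp)
  simp only [Fin.val_mk] at this
  omega

def betaRow (S : Finset ℕ) {m : ℕ} (h : S.card = m) (i : ℕ) : ℕ :=
  if hi : i < m then S.orderEmbOfFin h ⟨m - 1 - i, by omega⟩ - (m - 1 - i) else 0

theorem betaRow_anti (S : Finset ℕ) {m : ℕ} (h : S.card = m) :
    ∀ a b : ℕ, a ≤ b → betaRow S h b ≤ betaRow S h a := by
  intro a b hab
  unfold betaRow
  by_cases hb : b < m
  · have ha : a < m := by omega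
    rw [dif_pos hb, dif_pos ha]
    have hle : m - 1 - b ≤ m - 1 - a := by omega
    have hgap := orderEmb_gap h ⟨m - 1 - b, by omega⟩ ⟨m - 1 - a, by omega⟩ (by simpa using hle)
    have hge := orderEmb_ge h (⟨m - 1 - b, by omega⟩ : Fin m)
    simp only [Fin.val_mk] at hgap hge
    omega
  · rw [dif_neg hb]
    omega

theorem betaRow_zero (S : Finset ℕ) {m : ℕ} (h : S.card = m) :
    ∀ i, m ≤ i → betaRow S h i = 0 := by
  intro i hi
  unfold betaRow
  rw [dif_neg (by omega)]

def fromS (m : ℕ) (S : Finset ℕ) : YoungDiagram :=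
  if h : S.card = m then ofRowFn (betaRow S h) m (betaRow_anti S h) (betaRow_zero S h) else ⊥

theorem rowLen_fromS {m : ℕ} {S : Finset ℕ} (h : S.card = m) (i : ℕ) :
    (fromS m S).rowLen i = betaRow S h i := by
  rw [fromS, dif_pos h, rowLen_ofRowFn]

theorem colLen_fromS {m : ℕ} {S : Finset ℕ} (h : S.card = m) :
    (fromS m S).colLen 0 ≤ m := by
  rw [fromS, dif_pos h]
  exact colLen_ofRowFn_le

theorem rowLen_ext {μ ν : YoungDiagram} (h : ∀ i, μ.rowLen i = ν.rowLen i) : μ = ν := by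
  ext ⟨x, y⟩
  simp only [YoungDiagram.mem_cells]
  rw [YoungDiagram.mem_iff_lt_rowLen, YoungDiagram.mem_iff_lt_rowLen, h x]

theorem toS_fromS {m : ℕ} {S : Finset ℕ} (h : S.card = m) : toS m (fromS m S) = S := by
  apply Finset.eq_of_subset_of_card_le
  · intro x hx
    rw [toS, Finset.mem_image] at hx
    obtain ⟨j, hj, rfl⟩ := hx
    rw [Finset.mem_range] at hj
    rw [rowLen_fromS h]
    unfold betaRow
    rw [dif_pos (by omega : m - 1 - j < m)]
    have hmm : m - 1 - (m - 1 - j) = j := by omega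
    have hge := orderEmb_ge h (⟨m - 1 - (m - 1 - j), by omega⟩ : Fin m)
    simp only [Fin.val_mk, hmm] at hge ⊢
    have heq : (S.orderEmbOfFin h ⟨j, by omega⟩ : ℕ) - j + j = S.orderEmbOfFin h ⟨j, by omega⟩ := by
      omega
    rw [heq]
    exact S.orderEmbOfFin_mem h _
  · rw [h, card_toS]

theorem fromS_toS {m : ℕ} {μ : YoungDiagram} (hcol : μ.colLen 0 ≤ m) :
    fromS m (toS m μ) = μ := by
  have h : (toS m μ).card = m := card_toS μ m
  have hemb : ∀ j : Fin m, (toS m μ).orderEmbOfFin h j = μ.rowLen (m - 1 - (j : ℕ)) + j := by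
    have huniq := Finset.orderEmbOfFin_unique h
      (f := fun j : Fin m => μ.rowLen (m - 1 - (j : ℕ)) + (j : ℕ)) ?_ ?_
    · intro j; rw [← huniq]
    · intro j
      rw [toS, Finset.mem_image]
      exact ⟨(j : ℕ), Finset.mem_range.mpr j.isLt, rfl⟩
    · intro a b hab
      exact toS_strictMono _ _ (Fin.lt_def.mp hab) b.isLt
  apply rowLen_ext
  intro i
  rw [rowLen_fromS h]
  unfold betaRow
  by_cases hi : i < m
  · rw [dif_pos hi, hemb ⟨m - 1 - i, by omega⟩]
    simp only [Fin.val_mk]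
    have h1 : m - 1 - (m - 1 - i) = i := by omega
    rw [h1]
    omega
  · rw [dif_neg hi]
    exact ((colLen_le_iff.mp hcol) i (by omega)).symm

theorem sum_toS {μ : YoungDiagram} {m : ℕ} (hcol : μ.colLen 0 ≤ m) :
    2 * (∑ x ∈ toS m μ, x) = 2 * μ.card + m * (m - 1) := by
  rw [toS, Finset.sum_image (fun a ha b hb hab => toS_injOn ha hb hab)]
  rw [Finset.sum_add_distrib]
  rw [Finset.sum_range_reflect (fun i => μ.rowLen i) m]
  rw [← card_eq_sum_rowLens hcol]
  have := Finset.sum_range_id_mul_two m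
  omega

theorem odd_count (K : ℕ) :
    ∑ i ∈ Finset.range (2 * K), (if i % 2 = 1 then (1 : ℤ) else 0) = K := by
  induction K with
  | zero => simp
  | succ K ih =>
    have : 2 * (K + 1) = (2 * K + 1) + 1 := by ring
    rw [this, Finset.sum_range_succ, Finset.sum_range_succ, ih,
      if_pos (by omega : (2 * K + 1) % 2 = 1), if_neg (by omega : ¬ (2 * K) % 2 = 1)]
    push_cast; ring

theorem count_even_toS {μ : YoungDiagram} {M : ℕ} (h : μ.colLen 0 ≤ 2 * M) :
    (((toS (2 * M) μ).filter fun x => x % 2 = 0).card : ℤ) = dcol0 μ + M := by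
  set m := 2 * M with hm
  have h1 : ((Finset.range m).filter fun j => (μ.rowLen (m - 1 - j) + j) % 2 = 0).image
      (fun j => μ.rowLen (m - 1 - j) + j) = (toS m μ).filter fun x => x % 2 = 0 := by
    rw [toS, Finset.filter_image]
  have h2 : (((toS m μ).filter fun x => x % 2 = 0).card : ℤ) =
      ∑ j ∈ Finset.range m, (if (μ.rowLen (m - 1 - j) + j) % 2 = 0 then (1 : ℤ) else 0) := by
    rw [← h1, Finset.card_image_of_injOn (toS_injOn.mono (by
      intro x hx
      simp only [Finset.coe_filter, Set.mem_setOf_eq] at hx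
      simp only [Finset.coe_range, Set.mem_Iio]
      exact Finset.mem_range.mp hx.1))]
    rw [Finset.card_filter]
    push_cast [apply_ite (Nat.cast : ℕ → ℤ)]
    rfl
  rw [h2]
  have key : ∀ j ∈ Finset.range m, (if (μ.rowLen (m - 1 - j) + j) % 2 = 0 then (1 : ℤ) else 0) =
      sg (m - 1 - j) * ((μ.rowLen (m - 1 - j) % 2 : ℕ) : ℤ) +
        (if (m - 1 - j) % 2 = 1 then (1 : ℤ) else 0) := by
    intro j hj
    rw [Finset.mem_range] at hj
    set i := m - 1 - j with hi
    have hij : i + j = m - 1 := by omega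
    have hjm : j % 2 = (i + 1) % 2 := by omega
    rcases Nat.mod_two_eq_zero_or_one (μ.rowLen i) with hr | hr <;>
      rcases Nat.mod_two_eq_zero_or_one i with hi2 | hi2 <;> rw [hr]
    · rw [sg_even hi2, if_neg (by omega), if_neg (by omega)]; norm_num
    · rw [sg_odd hi2, if_pos (by omega), if_pos (by omega)]; norm_num
    · rw [sg_even hi2, if_pos (by omega), if_neg (by omega)]; norm_num
    · rw [sg_odd hi2, if_neg (by omega), if_pos (by omega)]; norm_num
  rw [Finset.sum_congr rfl key, Finset.sum_add_distrib]
  rw [Finset.sum_range_reflect (fun i => sg i * ((μ.rowLen i % 2 : ℕ) : ℤ)) m]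
  rw [Finset.sum_range_reflect (fun i => if i % 2 = 1 then (1 : ℤ) else 0) m]
  rw [← dcol0_eq_sum h, odd_count]



def evenPart (S : Finset ℕ) : Finset ℕ := (S.filter fun x => x % 2 = 0).image (· / 2)
def oddPart (S : Finset ℕ) : Finset ℕ := (S.filter fun x => x % 2 = 1).image (· / 2)
def unsplit (A B : Finset ℕ) : Finset ℕ :=
  A.image (fun a => 2 * a) ∪ B.image (fun b => 2 * b + 1)

theorem mem_unsplit {A B : Finset ℕ} {x : ℕ} :
    x ∈ unsplit A B ↔ (x % 2 = 0 ∧ x / 2 ∈ A) ∨ (x % 2 = 1 ∧ x / 2 ∈ B) := by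
  simp only [unsplit, Finset.mem_union, Finset.mem_image]
  constructor
  · rintro (⟨a, ha, rfl⟩ | ⟨b, hb, rfl⟩)
    · left; constructor; · omega
      have : 2 * a / 2 = a := by omega
      rwa [this]
    · right; constructor; · omega
      have : (2 * b + 1) / 2 = b := by omega
      rwa [this]
  · rintro (⟨h1, h2⟩ | ⟨h1, h2⟩)
    · exact Or.inl ⟨x / 2, h2, by omega⟩
    · exact Or.inr ⟨x / 2, h2, by omega⟩

theorem mem_evenPart {S : Finset ℕ} {a : ℕ} : a ∈ evenPart S ↔ 2 * a ∈ S := by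
  simp only [evenPart, Finset.mem_image, Finset.mem_filter]
  constructor
  · rintro ⟨x, ⟨hx, he⟩, rfl⟩
    have : 2 * (x / 2) = x := by omega
    rwa [this]
  · intro h
    exact ⟨2 * a, ⟨h, by omega⟩, by omega⟩

theorem mem_oddPart {S : Finset ℕ} {b : ℕ} : b ∈ oddPart S ↔ 2 * b + 1 ∈ S := by
  simp only [oddPart, Finset.mem_image, Finset.mem_filter]
  constructor
  · rintro ⟨x, ⟨hx, he⟩, rfl⟩
    have : 2 * (x / 2) + 1 = x := by omega
    rwa [this]
  · intro h
    exact ⟨2 * b + 1, ⟨h, by omega⟩, by omega⟩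

theorem evenPart_unsplit (A B : Finset ℕ) : evenPart (unsplit A B) = A := by
  ext a
  rw [mem_evenPart, mem_unsplit]
  constructor
  · rintro (⟨h1, h2⟩ | ⟨h1, h2⟩)
    · have : 2 * a / 2 = a := by omega
      rwa [this] at h2
    · omega
  · intro h
    left
    constructor
    · omega
    · have : 2 * a / 2 = a := by omega
      rwa [this]

theorem oddPart_unsplit (A B : Finset ℕ) : oddPart (unsplit A B) = B := by
  ext b
  rw [mem_oddPart, mem_unsplit]
  constructor
  · rintro (⟨h1, h2⟩ | ⟨h1, h2⟩)
    · omega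
    · have : (2 * b + 1) / 2 = b := by omega
      rwa [this] at h2
  · intro h
    right
    constructor
    · omega
    · have : (2 * b + 1) / 2 = b := by omega
      rwa [this]

theorem unsplit_parts (S : Finset ℕ) : unsplit (evenPart S) (oddPart S) = S := by
  ext x
  rw [mem_unsplit]
  constructor
  · rintro (⟨h1, h2⟩ | ⟨h1, h2⟩)
    · rw [mem_evenPart] at h2
      have : 2 * (x / 2) = x := by omega
      rwa [this] at h2
    · rw [mem_oddPart] at h2
      have : 2 * (x / 2) + 1 = x := by omega
      rwa [this] at h2
  · intro hx
    rcases Nat.mod_two_eq_zero_or_one x with h | h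
    · left
      refine ⟨h, mem_evenPart.mpr ?_⟩
      have : 2 * (x / 2) = x := by omega
      rwa [this]
    · right
      refine ⟨h, mem_oddPart.mpr ?_⟩
      have : 2 * (x / 2) + 1 = x := by omega
      rwa [this]

theorem card_evenPart (S : Finset ℕ) :
    (evenPart S).card = (S.filter fun x => x % 2 = 0).card := by
  rw [evenPart]
  apply Finset.card_image_of_injOn
  intro x hx y hy hxy
  simp only [Finset.coe_filter, Set.mem_setOf_eq] at hx hy
  simp only at hxy
  omega

theorem card_oddPart (S : Finset ℕ) :
    (oddPart S).card = (S.filter fun x => x % 2 = 1).card := by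
  rw [oddPart]
  apply Finset.card_image_of_injOn
  intro x hx y hy hxy
  simp only [Finset.coe_filter, Set.mem_setOf_eq] at hx hy
  simp only at hxy
  omega

theorem card_parts (S : Finset ℕ) :
    (evenPart S).card + (oddPart S).card = S.card := by
  rw [card_evenPart, card_oddPart]
  conv_rhs => rw [← Finset.card_filter_add_card_filter_not (p := fun x => x % 2 = 0)]
  congr 1
  apply Finset.card_bij (fun a _ => a)
  · intro a ha
    simp only [Finset.mem_filter] at ha ⊢
    exact ⟨ha.1, by omega⟩
  · intro a _ b _ h; exact h
  · intro b hb
    simp only [Finset.mem_filter] at hb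
    exact ⟨b, by simp only [Finset.mem_filter]; exact ⟨hb.1, by omega⟩, rfl⟩

theorem sum_evenPart (S : Finset ℕ) :
    2 * ∑ a ∈ evenPart S, a = ∑ x ∈ S.filter (fun x => x % 2 = 0), x := by
  rw [evenPart, Finset.sum_image (f := fun x => x) (by
    intro x hx y hy hxy
    simp only [Finset.coe_filter, Set.mem_setOf_eq] at hx hy hxy
    omega)]
  rw [Finset.mul_sum]
  apply Finset.sum_congr rfl
  intro x hx
  simp only [Finset.mem_filter] at hx
  omega

theorem sum_oddPart (S : Finset ℕ) :
    2 * ∑ b ∈ oddPart S, b + (oddPart S).card = ∑ x ∈ S.filter (fun x => x % 2 = 1), x := by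
  rw [card_oddPart, oddPart, Finset.sum_image (f := fun x => x) (by
    intro x hx y hy hxy
    simp only [Finset.coe_filter, Set.mem_setOf_eq] at hx hy hxy
    omega)]
  rw [Finset.mul_sum, Finset.card_eq_sum_ones, ← Finset.sum_add_distrib]
  apply Finset.sum_congr rfl
  intro x hx
  simp only [Finset.mem_filter] at hx
  omega

theorem sum_parts (S : Finset ℕ) :
    2 * (∑ a ∈ evenPart S, a) + (2 * ∑ b ∈ oddPart S, b + (oddPart S).card) =
      ∑ x ∈ S, x := by
  rw [sum_evenPart, sum_oddPart]
  rw [← Finset.sum_filter_add_sum_filter_not S (fun x => x % 2 = 0)]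
  congr 1
  apply Finset.sum_congr
  · ext x; simp only [Finset.mem_filter, and_congr_right_iff]; intro _; omega
  · intros; rfl


end TwoQuot

open TwoQuot in
theorem card_partitions_with_core_eq_card_pairs (d : ℤ) (n : ℕ) :
    Nonempty
      ({lam : YoungDiagram //
          dcol0 lam = d ∧ ∃ c : YoungDiagram, TwoCoreOf lam c ∧ lam.card = c.card + 2 * n} ≃
        {p : YoungDiagram × YoungDiagram // p.1.card + p.2.card = n}) := by
  classical
  obtain ⟨D, hsq', hD1, hD2⟩ : ∃ D : ℕ, ((D : ℤ) * D = d ^ 2 ∧ d ≤ (D : ℤ) ∧ -d ≤ (D : ℤ)) := by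
    refine ⟨d.natAbs, ?_, Int.le_natAbs, ?_⟩
    · rw [Int.natAbs_mul_self' d, sq]
    · have h := Int.le_natAbs (a := -d)
      rwa [Int.natAbs_neg] at h
  have h0DD : (0 : ℤ) ≤ (D : ℤ) * D := by positivity
  obtain ⟨M, hMcast⟩ : ∃ M : ℕ, (M : ℤ) = 2 * ((D : ℤ) * D) + D + n + 1 :=
    ⟨2 * (D * D) + D + n + 1, by push_cast; ring⟩
  obtain ⟨N, hNcast⟩ : ∃ N : ℕ, (N : ℤ) = 2 * (M : ℤ) := ⟨2 * M, by push_cast; ring⟩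
  have hNdef : N = 2 * M := by
    have : (N : ℤ) = ((2 * M : ℕ) : ℤ) := by rw [hNcast]; push_cast; ring
    exact_mod_cast this
  have hM1 : 1 ≤ M := by
    have : (1 : ℤ) ≤ (M : ℤ) := by rw [hMcast]; linarith
    exact_mod_cast this
  have hN1 : 1 ≤ N := by omega
  have hKex : (0 : ℤ) ≤ 2 * d ^ 2 - d := by
    rcases le_or_gt d 0 with h | h
    · nlinarith [sq_nonneg d]
    · nlinarith [mul_nonneg (by omega : (0:ℤ) ≤ d) (by omega : (0:ℤ) ≤ 2 * d - 1)]
  obtain ⟨K, hK⟩ : ∃ K : ℕ, (K : ℤ) = 2 * d ^ 2 - d :=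
    ⟨(2 * d ^ 2 - d).toNat, Int.toNat_of_nonneg hKex⟩
  obtain ⟨e, he⟩ : ∃ e : ℕ, (e : ℤ) = (M : ℤ) + d :=
    ⟨((M : ℤ) + d).toNat, Int.toNat_of_nonneg (by linarith [hMcast])⟩
  obtain ⟨o, ho⟩ : ∃ o : ℕ, (o : ℤ) = (M : ℤ) - d :=
    ⟨((M : ℤ) - d).toNat, Int.toNat_of_nonneg (by linarith [hMcast])⟩
  have he1 : 1 ≤ e := by
    have : (1 : ℤ) ≤ (e : ℤ) := by rw [he]; linarith [hMcast]
    exact_mod_cast this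
  have ho1 : 1 ≤ o := by
    have : (1 : ℤ) ≤ (o : ℤ) := by rw [ho]; linarith [hMcast]
    exact_mod_cast this
  have hne : n ≤ e := by
    have : (n : ℤ) ≤ (e : ℤ) := by rw [he]; linarith [hMcast]
    exact_mod_cast this
  have hno : n ≤ o := by
    have : (n : ℤ) ≤ (o : ℤ) := by rw [ho]; linarith [hMcast]
    exact_mod_cast this
  have heo : e + o = N := by
    have : ((e : ℤ)) + o = (N : ℤ) := by rw [he, ho, hNcast]; ring
    exact_mod_cast this
  have hKN : K + 2 * n ≤ N := by
    have : ((K : ℤ)) + 2 * n ≤ (N : ℤ) := by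
      rw [hK, hNcast, hMcast]
      nlinarith [sq_nonneg d, hsq', hD2]
    exact_mod_cast this
  -- translation of the left-hand condition
  have cond_iff : ∀ lam : YoungDiagram,
      (dcol0 lam = d ∧ ∃ c : YoungDiagram, TwoCoreOf lam c ∧ lam.card = c.card + 2 * n) ↔
      (dcol0 lam = d ∧ lam.card = K + 2 * n) := by
    intro lam
    constructor
    · rintro ⟨hd, c, ⟨hchain, hcore⟩, hcard⟩
      refine ⟨hd, ?_⟩
      have h1 := chain_dcol0 hchain
      have h2 := twoCore_card hcore
      rw [← h1, hd] at h2
      have h3 : (c.card : ℤ) = (K : ℤ) := by rw [h2, hK]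
      have h4 : c.card = K := by exact_mod_cast h3
      omega
    · rintro ⟨hd, hcard⟩
      obtain ⟨c, hchain, hcore⟩ := exists_core lam
      refine ⟨hd, c, ⟨hchain, hcore⟩, ?_⟩
      have h1 := chain_dcol0 hchain
      have h2 := twoCore_card hcore
      rw [← h1, hd] at h2
      have h3 : (c.card : ℤ) = (K : ℤ) := by rw [h2, hK]
      have h4 : c.card = K := by exact_mod_cast h3
      omega
  -- forward facts
  have fwd : ∀ lam : YoungDiagram, dcol0 lam = d → lam.card = K + 2 * n →
      (fromS e (evenPart (toS N lam))).card + (fromS o (oddPart (toS N lam))).card = n ∧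
      (evenPart (toS N lam)).card = e ∧ (oddPart (toS N lam)).card = o ∧
      lam.colLen 0 ≤ N := by
    intro lam hd hcard
    have hcardN : lam.card ≤ N := by omega
    have hcol : lam.colLen 0 ≤ N := le_trans (colLen_le lam) hcardN
    have hScard : (toS N lam).card = N := card_toS lam N
    have hev : (((toS (2 * M) lam).filter fun x => x % 2 = 0).card : ℤ) = dcol0 lam + M :=
      count_even_toS (by rw [← hNdef]; exact hcol)
    rw [← hNdef] at hev
    have cardA : (evenPart (toS N lam)).card = e := by
      have h1 : ((evenPart (toS N lam)).card : ℤ) = (e : ℤ) := by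
        rw [card_evenPart, hev, hd, he]; ring
      exact_mod_cast h1
    have cardAB := card_parts (toS N lam)
    have cardB : (oddPart (toS N lam)).card = o := by omega
    have ht0 : toS e (fromS e (evenPart (toS N lam))) = evenPart (toS N lam) := toS_fromS cardA
    have ht1 : toS o (fromS o (oddPart (toS N lam))) = oddPart (toS N lam) := toS_fromS cardB
    have hc0 : (fromS e (evenPart (toS N lam))).colLen 0 ≤ e := colLen_fromS cardA
    have hc1 : (fromS o (oddPart (toS N lam))).colLen 0 ≤ o := colLen_fromS cardB
    have F1 := sum_toS hc0
    rw [ht0] at F1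
    have F2 := sum_toS hc1
    rw [ht1] at F2
    have F3 := sum_parts (toS N lam)
    rw [cardB] at F3
    have F4 : 2 * (∑ x ∈ toS N lam, x) = 2 * lam.card + N * (N - 1) := sum_toS hcol
    zify [he1] at F1
    rw [he] at F1
    zify [ho1] at F2
    rw [ho] at F2
    zify at F3
    rw [ho] at F3
    zify [hN1] at F4
    rw [hNcast] at F4
    have hcardZ : (lam.card : ℤ) = 2 * d ^ 2 - d + 2 * n := by
      zify at hcard; rw [hcard, hK]
    refine ⟨?_, cardA, cardB, hcol⟩
    have hgoal4 : 4 * (((fromS e (evenPart (toS N lam))).card : ℤ) +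
        ((fromS o (oddPart (toS N lam))).card : ℤ)) = 4 * (n : ℤ) := by
      linear_combination (-2 : ℤ) * F1 + (-2 : ℤ) * F2 + 2 * F3 + F4 + 2 * hcardZ
    have : ((fromS e (evenPart (toS N lam))).card : ℤ) +
        ((fromS o (oddPart (toS N lam))).card : ℤ) = (n : ℤ) := by omega
    exact_mod_cast this
  -- backward facts
  have bwd : ∀ μ0 μ1 : YoungDiagram, μ0.card + μ1.card = n →
      dcol0 (fromS N (unsplit (toS e μ0) (toS o μ1))) = d ∧
      (fromS N (unsplit (toS e μ0) (toS o μ1))).card = K + 2 * n ∧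
      (unsplit (toS e μ0) (toS o μ1)).card = N ∧
      μ0.colLen 0 ≤ e ∧ μ1.colLen 0 ≤ o := by
    intro μ0 μ1 hp
    have hc0 : μ0.colLen 0 ≤ e := le_trans (colLen_le μ0) (by omega)
    have hc1 : μ1.colLen 0 ≤ o := le_trans (colLen_le μ1) (by omega)
    have hevA : evenPart (unsplit (toS e μ0) (toS o μ1)) = toS e μ0 := evenPart_unsplit _ _
    have hodB : oddPart (unsplit (toS e μ0) (toS o μ1)) = toS o μ1 := oddPart_unsplit _ _
    have hScard : (unsplit (toS e μ0) (toS o μ1)).card = N := by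
      have h1 := card_parts (unsplit (toS e μ0) (toS o μ1))
      rw [hevA, hodB, card_toS, card_toS] at h1
      omega
    have htS : toS N (fromS N (unsplit (toS e μ0) (toS o μ1))) =
        unsplit (toS e μ0) (toS o μ1) := toS_fromS hScard
    have hcollam : (fromS N (unsplit (toS e μ0) (toS o μ1))).colLen 0 ≤ N := colLen_fromS hScard
    have hev : (((toS (2 * M) (fromS N (unsplit (toS e μ0) (toS o μ1)))).filter
        fun x => x % 2 = 0).card : ℤ) =
        dcol0 (fromS N (unsplit (toS e μ0) (toS o μ1))) + M :=
      count_even_toS (by rw [← hNdef]; exact hcollam)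
    rw [← hNdef, htS] at hev
    have hevcard : ((unsplit (toS e μ0) (toS o μ1)).filter fun x => x % 2 = 0).card = e := by
      rw [← card_evenPart, hevA, card_toS]
    rw [hevcard] at hev
    have hdcol : dcol0 (fromS N (unsplit (toS e μ0) (toS o μ1))) = d := by
      rw [he] at hev; omega
    refine ⟨hdcol, ?_, hScard, hc0, hc1⟩
    have F1 : 2 * (∑ x ∈ toS e μ0, x) = 2 * μ0.card + e * (e - 1) := sum_toS hc0
    have F2 : 2 * (∑ x ∈ toS o μ1, x) = 2 * μ1.card + o * (o - 1) := sum_toS hc1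
    have F3 := sum_parts (unsplit (toS e μ0) (toS o μ1))
    rw [hevA, hodB, card_toS] at F3
    have F4 : 2 * (∑ x ∈ toS N (fromS N (unsplit (toS e μ0) (toS o μ1))), x) =
        2 * (fromS N (unsplit (toS e μ0) (toS o μ1))).card + N * (N - 1) :=
      sum_toS hcollam
    rw [htS] at F4
    zify [he1] at F1
    rw [he] at F1
    zify [ho1] at F2
    rw [ho] at F2
    zify at F3
    rw [ho] at F3
    zify [hN1] at F4
    rw [hNcast] at F4
    zify at hp
    have hgoal : 2 * ((fromS N (unsplit (toS e μ0) (toS o μ1))).card : ℤ) =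
        2 * (2 * d ^ 2 - d) + 4 * (n : ℤ) := by
      linear_combination (-1 : ℤ) * F4 + (-2 : ℤ) * F3 + 2 * F1 + 2 * F2 + 4 * hp
    have h5 : ((fromS N (unsplit (toS e μ0) (toS o μ1))).card : ℤ) = (K : ℤ) + 2 * n := by
      rw [hK]; linarith [hgoal]
    exact_mod_cast h5
  -- the equivalence
  refine ⟨{
    toFun := fun x =>
      ⟨(fromS e (evenPart (toS N x.1)), fromS o (oddPart (toS N x.1))),
        (fwd x.1 ((cond_iff x.1).mp x.2).1 ((cond_iff x.1).mp x.2).2).1⟩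
    invFun := fun y =>
      ⟨fromS N (unsplit (toS e y.1.1) (toS o y.1.2)),
        (cond_iff _).mpr ⟨(bwd y.1.1 y.1.2 y.2).1, (bwd y.1.1 y.1.2 y.2).2.1⟩⟩
    left_inv := ?_
    right_inv := ?_ }⟩
  · rintro ⟨lam, hlam⟩
    apply Subtype.ext
    obtain ⟨-, cardA, cardB, hcol⟩ :=
      fwd lam ((cond_iff lam).mp hlam).1 ((cond_iff lam).mp hlam).2
    show fromS N (unsplit (toS e (fromS e (evenPart (toS N lam))))
        (toS o (fromS o (oddPart (toS N lam))))) = lam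
    rw [toS_fromS cardA, toS_fromS cardB, unsplit_parts, fromS_toS hcol]
  · rintro ⟨⟨μ0, μ1⟩, hp⟩
    apply Subtype.ext
    obtain ⟨-, -, hScard, hc0, hc1⟩ := bwd μ0 μ1 hp
    show (fromS e (evenPart (toS N (fromS N (unsplit (toS e μ0) (toS o μ1))))),
        fromS o (oddPart (toS N (fromS N (unsplit (toS e μ0) (toS o μ1)))))) = (μ0, μ1)
    rw [toS_fromS hScard, evenPart_unsplit, oddPart_unsplit, fromS_toS hc0, fromS_toS hc1]
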